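/- For all x in (0, π), tan(x/2) ≤ 2/(π − x) − (π − x)/6. -/

import Mathlib

open Real

private lemma derivA (x : ℝ) :
    HasDerivAt (fun t => Real.sin t - t * Real.cos t) (x * Real.sin x) x := by
  have := (Real.hasDerivAt_sin x).sub ((hasDerivAt_id x).mul (Real.hasDerivAt_cos x))
  refine this.congr_deriv ?_
  simp only [id_eq]; ring

private lemma derivB (x : ℝ) :
    HasDerivAt (fun t => 3 * Real.sin t - 3 * t * Real.cos t - t ^ 2 * Real.sin t)
      (x * (Real.sin x - x * Real.cos x)) x := by
  have h1 := ((Real.hasDerivAt_sin x).const_mul 3).sub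
    ((((hasDerivAt_id x).const_mul 3)).mul (Real.hasDerivAt_cos x))
  have h2 := (hasDerivAt_pow 2 x).mul (Real.hasDerivAt_sin x)
  have h := h1.sub h2
  refine h.congr_deriv ?_
  simp only [id_eq]; push_cast; ring

private lemma auxA : ∀ t ∈ Set.Icc (0:ℝ) (π/2), t * Real.cos t ≤ Real.sin t := by
  have mono : MonotoneOn (fun t => Real.sin t - t * Real.cos t) (Set.Icc 0 (π/2)) := by
    apply monotoneOn_of_deriv_nonneg (convex_Icc _ _)
    · exact (Real.continuous_sin.sub (continuous_id.mul Real.continuous_cos)).continuousOn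
    · exact fun x _ => (derivA x).differentiableAt.differentiableWithinAt
    · intro x hx
      rw [(derivA x).deriv]
      rw [interior_Icc] at hx
      have hs : 0 ≤ Real.sin x := Real.sin_nonneg_of_nonneg_of_le_pi hx.1.le
        (le_trans hx.2.le (by linarith [Real.pi_pos]))
      exact mul_nonneg hx.1.le hs
  intro t ht
  have := mono (Set.left_mem_Icc.mpr (by positivity)) ht ht.1
  simp at this
  linarith

private lemma auxB : ∀ t ∈ Set.Icc (0:ℝ) (π/2),
    0 ≤ 3 * Real.sin t - 3 * t * Real.cos t - t ^ 2 * Real.sin t := by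
  have mono : MonotoneOn (fun t => 3 * Real.sin t - 3 * t * Real.cos t - t ^ 2 * Real.sin t)
      (Set.Icc 0 (π/2)) := by
    apply monotoneOn_of_deriv_nonneg (convex_Icc _ _)
    · exact (((continuous_const.mul Real.continuous_sin).sub
        ((continuous_const.mul continuous_id).mul Real.continuous_cos)).sub
        ((continuous_pow 2).mul Real.continuous_sin)).continuousOn
    · exact fun x _ => (derivB x).differentiableAt.differentiableWithinAt
    · intro x hx
      rw [(derivB x).deriv]
      rw [interior_Icc] at hx
      have := auxA x ⟨hx.1.le, hx.2.le⟩
      nlinarith [hx.1]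
  intro t ht
  have := mono (Set.left_mem_Icc.mpr (by positivity)) ht ht.1
  simpa using this

theorem stmt_7 : ∀ x ∈ Set.Ioo (0 : ℝ) π,
    Real.tan (x / 2) ≤ 2 / (π - x) - (π - x) / 6 := by
  intro x hx
  obtain ⟨hx0, hxpi⟩ := hx
  set t : ℝ := (π - x) / 2 with ht
  have ht0 : 0 < t := by simp [ht]; linarith
  have htlt : t < π / 2 := by simp [ht]; linarith
  have hsin : 0 < Real.sin t := Real.sin_pos_of_pos_of_lt_pi ht0
    (lt_trans htlt (by linarith [Real.pi_pos]))
  have hx2 : x / 2 = π / 2 - t := by simp [ht]; ring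
  have htan : Real.tan (x / 2) = Real.cos t / Real.sin t := by
    rw [hx2, Real.tan_pi_div_two_sub, Real.tan_eq_sin_div_cos, inv_div]
  have hrhs : 2 / (π - x) - (π - x) / 6 = 1 / t - t / 3 := by
    have h2t : π - x = 2 * t := by simp [ht]; ring
    rw [h2t]; field_simp; ring
  rw [htan, hrhs]
  have hB := auxB t ⟨ht0.le, htlt.le⟩
  rw [div_le_iff₀ hsin]
  have h3t : (0:ℝ) < 3 * t := by linarith
  have heq : (1 / t - t / 3) = (3 - t ^ 2) / (3 * t) := by field_simp
  rw [heq, div_mul_eq_mul_div, le_div_iff₀ h3t]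
  nlinarith
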